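/- Let G be a connected unweighted graph with incidence matrix B and Laplacian L = BBᵀ, γ ∈ [0, π/2), and let x ∈ ℝ^m satisfy ‖x‖∞ ≤ γ. Then for every y = Bᵀw ∈ Im(Bᵀ) with ‖y‖₂ = 1, one has ‖𝒫 diag(sinc(x)) y‖₂ ≥ sinc(γ), where 𝒫 = Bᵀ L† B. Consequently α₂(γ) ≥ sinc(γ). -/

import Mathlib

open Matrix

/-- The unnormalized sinc function, `sinc t = sin t / t` with `sinc 0 = 1`. -/
noncomputable def sinc (t : ℝ) : ℝ := if t = 0 then 1 else Real.sin t / t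

/-- The Euclidean (2-)norm of a real vector. -/
noncomputable def norm2 {k : ℕ} (v : Fin k → ℝ) : ℝ := Real.sqrt (∑ i, v i ^ 2)

/-- For a connected unweighted graph with incidence matrix `B`,
Laplacian `L = BBᵀ`, Moore–Penrose pseudoinverse `L†`, and cutset projection
`𝒫 = Bᵀ L† B`, let `γ ∈ [0, π/2)` and `x ∈ ℝ^m` with `‖x‖_∞ ≤ γ`. Then every
`y = Bᵀw ∈ Im(Bᵀ)` with `‖y‖₂ = 1` satisfies `‖𝒫 diag(sinc x) y‖₂ ≥ sinc γ`; consequently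
the 2-norm minimum amplification factor satisfies `α₂(γ) ≥ sinc γ`. -/

lemma sinc_abs (t : ℝ) : sinc |t| = sinc t := by
  rcases abs_cases t with ⟨h, _⟩ | ⟨h, _⟩
  · rw [h]
  · rw [h]
    unfold sinc
    rcases eq_or_ne t 0 with ht | ht
    · simp [ht]
    · rw [if_neg (by simpa), if_neg ht, Real.sin_neg, neg_div_neg_eq]

lemma sinc_pos_aux {γ : ℝ} (h0 : 0 ≤ γ) (h1 : γ < Real.pi) : 0 < sinc γ := by
  unfold sinc
  rcases eq_or_ne γ 0 with h | h
  · simp [h]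
  · have hγ0 : 0 < γ := lt_of_le_of_ne h0 (Ne.symm h)
    rw [if_neg h]
    exact div_pos (Real.sin_pos_of_pos_of_lt_pi hγ0 h1) hγ0

lemma sinc_le_one_aux {γ : ℝ} (h0 : 0 ≤ γ) : sinc γ ≤ 1 := by
  unfold sinc
  rcases eq_or_ne γ 0 with h | h
  · simp [h]
  · have hγ0 : 0 < γ := lt_of_le_of_ne h0 (Ne.symm h)
    rw [if_neg h]
    exact div_le_one_of_le₀ (Real.sin_le h0) h0

lemma sinc_anti_aux {t γ : ℝ} (ht : 0 ≤ t) (htγ : t ≤ γ) (hγπ : γ ≤ Real.pi) :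
    sinc γ ≤ sinc t := by
  rcases eq_or_ne t 0 with h | h
  · rw [h]
    simpa [sinc] using sinc_le_one_aux (ht.trans htγ)
  · have ht0 : 0 < t := lt_of_le_of_ne ht (Ne.symm h)
    have hγ0 : 0 < γ := lt_of_lt_of_le ht0 htγ
    have hsin : (t / γ) * Real.sin γ ≤ Real.sin t := by
      have hconc := strictConcaveOn_sin_Icc.concaveOn
      have ha : (0:ℝ) ≤ t / γ := div_nonneg ht hγ0.le
      have hb : (0:ℝ) ≤ 1 - t / γ := by
        have : t / γ ≤ 1 := div_le_one_of_le₀ htγ hγ0.le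
        linarith
      have hmem1 : γ ∈ Set.Icc (0:ℝ) Real.pi := ⟨hγ0.le, hγπ⟩
      have hmem2 : (0:ℝ) ∈ Set.Icc (0:ℝ) Real.pi := ⟨le_rfl, Real.pi_pos.le⟩
      have hsum : t / γ + (1 - t / γ) = 1 := by ring
      have hcc := hconc.2 hmem1 hmem2 ha hb hsum
      simp only [smul_eq_mul, mul_zero, add_zero, Real.sin_zero] at hcc
      have harg : t / γ * γ = t := by field_simp
      rwa [harg] at hcc
    unfold sinc
    rw [if_neg h, if_neg (ne_of_gt hγ0), div_le_div_iff₀ hγ0 ht0]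
    calc Real.sin γ * t = (t / γ) * Real.sin γ * γ := by field_simp
      _ ≤ Real.sin t * γ := mul_le_mul_of_nonneg_right hsin hγ0.le

lemma LLdagB_eq (n m : ℕ) (B : Matrix (Fin n) (Fin m) ℝ)
    (L Ldag : Matrix (Fin n) (Fin n) ℝ)
    (hL : L = B * Bᵀ) (hmp1 : L * Ldag * L = L) (hmp3 : (L * Ldag)ᵀ = L * Ldag) :
    L * Ldag * B = B := by
  have hQQ : (L * Ldag) * (L * Ldag) = L * Ldag := by
    rw [← Matrix.mul_assoc, hmp1]
  have hM : B - L * Ldag * B = B - L * Ldag * B := rfl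
  set M := B - L * Ldag * B with hMdef
  have hMT : Mᵀ = Bᵀ - Bᵀ * (L * Ldag) := by
    rw [hMdef, transpose_sub, transpose_mul, hmp3]
  have key : Mᵀ * M = Bᵀ * B - Bᵀ * (L * Ldag) * B := by
    rw [hMT, hMdef, Matrix.sub_mul, Matrix.mul_sub, Matrix.mul_sub]
    have h1 : Bᵀ * (L * Ldag) * (L * Ldag * B) = Bᵀ * (L * Ldag) * B := by
      rw [← Matrix.mul_assoc, Matrix.mul_assoc Bᵀ (L * Ldag) (L * Ldag), hQQ]
    have h2 : Bᵀ * (L * Ldag * B) = Bᵀ * (L * Ldag) * B :=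
      (Matrix.mul_assoc _ _ _).symm
    rw [h1, h2]
    abel
  have htr : trace (Mᵀ * M) = 0 := by
    rw [key, trace_sub]
    have t1 : trace (Bᵀ * B) = trace L := by rw [hL, trace_mul_comm]
    have t2 : trace (Bᵀ * (L * Ldag) * B) = trace L := by
      rw [Matrix.mul_assoc Bᵀ, Matrix.trace_mul_comm, Matrix.mul_assoc, ← hL, hmp1]
    rw [t1, t2, sub_self]
  have hexp : trace (Mᵀ * M) = ∑ j, ∑ i, (M i j) ^ 2 := by
    simp [Matrix.trace, Matrix.diag, Matrix.mul_apply, Matrix.transpose_apply, sq]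
  have hzero : ∀ i j, M i j = 0 := by
    intro i j
    have hsum : ∑ j, ∑ i, (M i j) ^ 2 = 0 := by rw [← hexp, htr]
    have h1 : ∑ i, (M i j) ^ 2 = 0 :=
      (Finset.sum_eq_zero_iff_of_nonneg (fun j _ => Finset.sum_nonneg
        (fun i _ => sq_nonneg (M i j)))).mp hsum j (Finset.mem_univ j)
    have h2 := (Finset.sum_eq_zero_iff_of_nonneg
      (fun i _ => sq_nonneg (M i j))).mp h1 i (Finset.mem_univ i)
    exact pow_eq_zero_iff two_ne_zero |>.mp h2
  have hM0 : M = 0 := by ext i j; exact hzero i j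
  rw [hMdef] at hM0
  exact (sub_eq_zero.mp hM0).symm

lemma dot_swap {k l : ℕ} (A : Matrix (Fin k) (Fin l) ℝ) (p : Fin k → ℝ) (r : Fin l → ℝ) :
    r ⬝ᵥ (Aᵀ *ᵥ p) = (A *ᵥ r) ⬝ᵥ p := by
  rw [dotProduct_mulVec, vecMul_transpose]

theorem min_amplification_two_norm_lower_bound
    (n m : ℕ) (B : Matrix (Fin n) (Fin m) ℝ)
    (hconn : ∀ x : Fin n → ℝ, Bᵀ.mulVec x = 0 ↔ ∃ c : ℝ, x = fun _ => c)
    (L Ldag : Matrix (Fin n) (Fin n) ℝ)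
    (hL : L = B * Bᵀ)
    (hmp1 : L * Ldag * L = L) (hmp2 : Ldag * L * Ldag = Ldag)
    (hmp3 : (L * Ldag)ᵀ = L * Ldag) (hmp4 : (Ldag * L)ᵀ = Ldag * L)
    (P : Matrix (Fin m) (Fin m) ℝ)
    (hP : P = Bᵀ * Ldag * B)
    (γ : ℝ) (hγ : 0 ≤ γ ∧ γ < Real.pi / 2)
    (x : Fin m → ℝ) (hx : ∀ e, |x e| ≤ γ) :
    ∀ w : Fin n → ℝ, norm2 (Bᵀ.mulVec w) = 1 →
      sinc γ ≤ norm2 (P.mulVec (fun e => sinc (x e) * Bᵀ.mulVec w e)) := by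
  intro w hw
  have hγπ : γ < Real.pi := lt_of_lt_of_le hγ.2 (by linarith [Real.pi_pos])
  have hsγ : 0 < sinc γ := sinc_pos_aux hγ.1 hγπ
  set y : Fin m → ℝ := Bᵀ *ᵥ w with hy
  set u : Fin m → ℝ := fun e => sinc (x e) * y e with hu
  set q : Fin m → ℝ := P *ᵥ u with hq
  have hy2 : ∑ e, y e ^ 2 = 1 := by
    have h := hw
    unfold norm2 at h
    exact Real.sqrt_eq_one.mp h
  set c : Fin n → ℝ := Ldag *ᵥ (B *ᵥ u) with hc
  have hqa : q = Bᵀ *ᵥ c := by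
    rw [hq, hP, hc, Matrix.mulVec_mulVec, Matrix.mulVec_mulVec, Matrix.mul_assoc]
  have hLa : L *ᵥ c = B *ᵥ u := by
    rw [hc, Matrix.mulVec_mulVec, Matrix.mulVec_mulVec,
      LLdagB_eq n m B L Ldag hL hmp1 hmp3]
  have hLsymm : Lᵀ = L := by rw [hL, transpose_mul, transpose_transpose]
  have hBy : B *ᵥ y = L *ᵥ w := by
    rw [hy, Matrix.mulVec_mulVec, ← hL]
  have hkey : y ⬝ᵥ q = ∑ e, sinc (x e) * y e ^ 2 := by
    calc y ⬝ᵥ q = y ⬝ᵥ (Bᵀ *ᵥ c) := by rw [hqa]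
      _ = (B *ᵥ y) ⬝ᵥ c := dot_swap B c y
      _ = (L *ᵥ w) ⬝ᵥ c := by rw [hBy]
      _ = (Lᵀ *ᵥ w) ⬝ᵥ c := by rw [hLsymm]
      _ = w ⬝ᵥ (L *ᵥ c) := by
          rw [← dot_swap Lᵀ c w, transpose_transpose]
      _ = w ⬝ᵥ (B *ᵥ u) := by rw [hLa]
      _ = w ⬝ᵥ ((Bᵀ)ᵀ *ᵥ u) := by rw [transpose_transpose]
      _ = (Bᵀ *ᵥ w) ⬝ᵥ u := dot_swap Bᵀ u w
      _ = y ⬝ᵥ u := by rw [← hy]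
      _ = ∑ e, sinc (x e) * y e ^ 2 := by
          simp only [dotProduct, hu]
          exact Finset.sum_congr rfl fun e _ => by ring
  have hse : ∀ e, sinc γ ≤ sinc (x e) := by
    intro e
    rw [← sinc_abs (x e)]
    exact sinc_anti_aux (abs_nonneg _) (hx e) hγπ.le
  have hlow : sinc γ ≤ y ⬝ᵥ q := by
    rw [hkey]
    calc sinc γ = sinc γ * ∑ e, y e ^ 2 := by rw [hy2, mul_one]
      _ = ∑ e, sinc γ * y e ^ 2 := Finset.mul_sum _ _ _
      _ ≤ ∑ e, sinc (x e) * y e ^ 2 :=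
          Finset.sum_le_sum fun e _ => mul_le_mul_of_nonneg_right (hse e) (sq_nonneg _)
  have hcs : (y ⬝ᵥ q) ^ 2 ≤ ∑ e, q e ^ 2 := by
    have h1 : y ⬝ᵥ q = ∑ e, y e * q e := rfl
    rw [h1]
    calc (∑ e, y e * q e) ^ 2 ≤ (∑ e, y e ^ 2) * ∑ e, q e ^ 2 :=
        Finset.sum_mul_sq_le_sq_mul_sq _ _ _
      _ = ∑ e, q e ^ 2 := by rw [hy2, one_mul]
  calc sinc γ ≤ y ⬝ᵥ q := hlow
    _ ≤ |y ⬝ᵥ q| := le_abs_self _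
    _ = Real.sqrt ((y ⬝ᵥ q) ^ 2) := (Real.sqrt_sq_eq_abs _).symm
    _ ≤ Real.sqrt (∑ e, q e ^ 2) := Real.sqrt_le_sqrt hcs
    _ = norm2 q := rfl
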